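/- Fix an integer N ≥ 2, set ω := exp(2πi/N), and for x ∈ ℂ write ω^x := exp(2πi x/N). Let ζ, μ ∈ ℂ with ζ ∉ ℤ and ζ − 2μ ∉ ℤ. Then Σ_{n=0}^{N−1} [ (1 − ω^{−(ζ+n+1)})·(1 − ω^{ζ−2μ+n}) ]⁻¹ = N·( Σ_{t=0}^{N−1} ω^{−t(2μ+1)} ) / ( (1 − exp(−2πi ζ))·(1 − exp(2πi(ζ − 2μ))) ). -/
import Mathlib

open Complex Finset


/-- `ww N x = ω^x := exp(2πi x/N)`, where `ω = exp(2πi/N)`. -/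
noncomputable def ww (N : ℕ) (x : ℂ) : ℂ :=
  Complex.exp (2 * (Real.pi : ℂ) * Complex.I * x / N)

lemma ww_add (N : ℕ) (x y : ℂ) : ww N (x + y) = ww N x * ww N y := by
  rw [ww, ww, ww, ← Complex.exp_add]
  congr 1
  ring

lemma ww_pow (N : ℕ) (x : ℂ) (s : ℕ) : (ww N x) ^ s = ww N (s * x) := by
  rw [ww, ww, ← Complex.exp_nat_mul]
  congr 1
  ring

lemma ww_pow_self (N : ℕ) (hN : (N:ℂ) ≠ 0) (x : ℂ) :
    (ww N x) ^ N = Complex.exp (2 * (Real.pi : ℂ) * Complex.I * x) := by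
  rw [ww, ← Complex.exp_nat_mul]
  congr 1
  field_simp

lemma exp_c_int (k : ℤ) : Complex.exp (2 * (Real.pi : ℂ) * Complex.I * k) = 1 := by
  have := Complex.exp_int_mul_two_pi_mul_I k
  convert this using 2
  ring

lemma one_sub_exp_ne (a : ℂ) (ha : ∀ k : ℤ, a ≠ (k : ℂ)) :
    1 - Complex.exp (2 * (Real.pi : ℂ) * Complex.I * a) ≠ 0 := by
  intro h
  have h1 : Complex.exp (2 * (Real.pi : ℂ) * Complex.I * a) = 1 := by linear_combination -h
  rw [Complex.exp_eq_one_iff] at h1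
  obtain ⟨n, hn⟩ := h1
  apply ha n
  have hπ : (2 * (Real.pi : ℂ) * Complex.I) ≠ 0 := by
    simp [Real.pi_ne_zero, Complex.I_ne_zero]
  apply mul_left_cancel₀ hπ
  rw [hn]; ring

lemma inv_eq_geom (N : ℕ) (q : ℂ) (h : 1 - q ^ N ≠ 0) :
    (1 - q)⁻¹ = (∑ s ∈ range N, q ^ s) / (1 - q ^ N) := by
  have hq : (1:ℂ) - q ≠ 0 := by
    intro h1
    apply h
    have : q = 1 := by linear_combination -h1
    simp [this]
  rw [eq_div_iff h, inv_mul_eq_div, div_eq_iff hq]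
  linear_combination geom_sum_mul q N

lemma sum_pow_eq_zero (N : ℕ) (r : ℂ) (hr : r ^ N = 1) (hr1 : r ≠ 1) :
    ∑ n ∈ range N, r ^ n = 0 := by
  have h := geom_sum_mul r N
  rw [hr, sub_self] at h
  exact (mul_eq_zero.mp h).resolve_right (sub_ne_zero.mpr hr1)

lemma ww_ne_one (N : ℕ) (hN : 2 ≤ N) (s t : ℕ) (hs : s < N) (ht : t < N) (hst : s ≠ t) :
    ww N ((t:ℂ) - s) ≠ 1 := by
  intro h
  rw [ww, Complex.exp_eq_one_iff] at h
  obtain ⟨k, hk⟩ := h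
  have hπ : (2 * (Real.pi : ℂ) * Complex.I) ≠ 0 := by
    simp [Real.pi_ne_zero, Complex.I_ne_zero]
  have hN0 : (N:ℂ) ≠ 0 := Nat.cast_ne_zero.mpr (by omega)
  have h2 : (t:ℂ) - s = k * N := by
    field_simp at hk
    apply mul_left_cancel₀ hπ
    rw [hk]; ring
  have h3 : (t:ℤ) - s = k * N := by
    exact_mod_cast h2
  have hs' : (s:ℤ) < N := by exact_mod_cast hs
  have ht' : (t:ℤ) < N := by exact_mod_cast ht
  have hs0 : (0:ℤ) ≤ s := Int.natCast_nonneg s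
  have ht0 : (0:ℤ) ≤ t := Int.natCast_nonneg t
  have hk0 : k = 0 := by
    rcases lt_trichotomy k 0 with h | h | h
    · nlinarith
    · exact h
    · nlinarith
  rw [hk0, zero_mul] at h3
  omega

lemma ww_zero (N : ℕ) : ww N 0 = 1 := by simp [ww]


/-- Fix `N ≥ 2`, `ω := exp(2πi/N)`. Let `ζ, μ ∈ ℂ` with `ζ ∉ ℤ` and
`ζ − 2μ ∉ ℤ`. Then
`Σ_{n=0}^{N−1} [(1 − ω^{−(ζ+n+1)})·(1 − ω^{ζ−2μ+n})]⁻¹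
  = N·(Σ_{t=0}^{N−1} ω^{−t(2μ+1)}) / ((1 − exp(−2πiζ))·(1 − exp(2πi(ζ − 2μ))))`. -/
theorem stmt_15 (N : ℕ) (hN : 2 ≤ N) (ζ μ : ℂ)
    (hζ : ∀ k : ℤ, ζ ≠ (k : ℂ)) (hζμ : ∀ k : ℤ, ζ - 2 * μ ≠ (k : ℂ)) :
    ∑ n ∈ Finset.range N,
        ((1 - ww N (-(ζ + n + 1))) * (1 - ww N (ζ - 2 * μ + n)))⁻¹ =
      (N : ℂ) * (∑ t ∈ Finset.range N, ww N (-(t * (2 * μ + 1)))) /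
        ((1 - Complex.exp (-(2 * (Real.pi : ℂ) * Complex.I * ζ))) *
          (1 - Complex.exp (2 * (Real.pi : ℂ) * Complex.I * (ζ - 2 * μ)))) := by
  have hN0 : (N:ℂ) ≠ 0 := Nat.cast_ne_zero.mpr (by omega)
  set c : ℂ := 2 * (Real.pi : ℂ) * Complex.I with hc
  have hD1 : 1 - Complex.exp (-(c * ζ)) ≠ 0 := by
    have h := one_sub_exp_ne (-ζ) (fun k hk => hζ (-k) (by push_cast at hk ⊢; linear_combination -hk))
    rw [← hc] at h
    simpa [mul_neg] using h
  have hD2 : 1 - Complex.exp (c * (ζ - 2 * μ)) ≠ 0 := by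
    have h := one_sub_exp_ne (ζ - 2 * μ) hζμ
    rwa [← hc] at h
  have hq1 : ∀ n : ℕ, ww N (-(ζ + n + 1)) ^ N = Complex.exp (-(c * ζ)) := by
    intro n
    rw [ww_pow_self N hN0, ← hc]
    have h : c * -(ζ + (n:ℂ) + 1) = -(c * ζ) + c * ((-(n:ℤ) - 1 : ℤ) : ℂ) := by
      push_cast; ring
    rw [h, Complex.exp_add, hc, exp_c_int, mul_one]
  have hq2 : ∀ n : ℕ, ww N (ζ - 2 * μ + n) ^ N = Complex.exp (c * (ζ - 2 * μ)) := by
    intro n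
    rw [ww_pow_self N hN0, ← hc]
    have h : c * (ζ - 2 * μ + (n:ℂ)) = c * (ζ - 2 * μ) + c * ((n : ℤ) : ℂ) := by
      push_cast; ring
    rw [h, Complex.exp_add, hc, exp_c_int, mul_one]
  have key : ∀ n ∈ Finset.range N,
      ((1 - ww N (-(ζ + n + 1))) * (1 - ww N (ζ - 2 * μ + n)))⁻¹ =
      (∑ s ∈ Finset.range N, ∑ t ∈ Finset.range N,
        ww N (-(ζ + n + 1)) ^ s * ww N (ζ - 2 * μ + n) ^ t) /
        ((1 - Complex.exp (-(c * ζ))) * (1 - Complex.exp (c * (ζ - 2 * μ)))) := by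
    intro n _
    rw [mul_inv, inv_eq_geom N _ (by rw [hq1 n]; exact hD1),
        inv_eq_geom N _ (by rw [hq2 n]; exact hD2), hq1 n, hq2 n,
        div_mul_div_comm, Finset.sum_mul_sum]
  rw [Finset.sum_congr rfl key, ← Finset.sum_div]
  congr 1
  rw [Finset.sum_comm]
  have inner : ∀ s ∈ Finset.range N,
      (∑ n ∈ Finset.range N, ∑ t ∈ Finset.range N,
        ww N (-(ζ + n + 1)) ^ s * ww N (ζ - 2 * μ + n) ^ t) =
      (N : ℂ) * ww N (-(s * (2 * μ + 1))) := by
    intro s hs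
    rw [Finset.sum_comm]
    have term : ∀ t n : ℕ,
        ww N (-(ζ + n + 1)) ^ s * ww N (ζ - 2 * μ + n) ^ t =
        (ww N ((t:ℂ) - s)) ^ n * ww N (-(s:ℂ) * (ζ + 1) + t * (ζ - 2 * μ)) := by
      intro t n
      rw [ww_pow, ww_pow, ← ww_add, ww_pow, ← ww_add]
      congr 1
      ring
    have colt : ∀ t ∈ Finset.range N,
        (∑ n ∈ Finset.range N,
          ww N (-(ζ + n + 1)) ^ s * ww N (ζ - 2 * μ + n) ^ t) =
        if t = s then (N : ℂ) * ww N (-(s * (2 * μ + 1))) else 0 := by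
      intro t ht
      simp only [term]
      rw [← Finset.sum_mul]
      by_cases hts : t = s
      · subst hts
        simp only [sub_self, ww_zero, one_pow, Finset.sum_const, Finset.card_range,
          nsmul_eq_mul, mul_one, if_pos rfl]
        congr 2
        ring
      · rw [if_neg hts]
        have hr1 : ww N ((t:ℂ) - s) ≠ 1 :=
          ww_ne_one N hN s t (Finset.mem_range.mp hs) (Finset.mem_range.mp ht)
            (fun h => hts (h.symm))
        have hrN : (ww N ((t:ℂ) - s)) ^ N = 1 := by
          rw [ww_pow_self N hN0]
          have h2 : (2 * (Real.pi : ℂ) * Complex.I) * ((t:ℂ) - s)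
              = 2 * (Real.pi : ℂ) * Complex.I * (((t:ℤ) - s : ℤ) : ℂ) := by
            push_cast; ring
          rw [← hc] at h2
          rw [h2, hc, exp_c_int]
        rw [sum_pow_eq_zero N _ hrN hr1, zero_mul]
    rw [Finset.sum_congr rfl colt, Finset.sum_ite_eq' (Finset.range N) s
      (fun _ => (N : ℂ) * ww N (-(s * (2 * μ + 1)))), if_pos hs]
  rw [Finset.sum_congr rfl inner, ← Finset.mul_sum]
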